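/- Let η ∈ (0,1), n̄_B > 0, and let α, β, γ be complex numbers with |α|² + |β|² = 1 and |γ| ≤ |α||β|. With F as in the previous statement, F is minimized by γ = 0 and |α|² = |β|² = 1/2, and the minimum value equals (1-η)² / (2 ηn̄_B(1+ηn̄_B)), i.e., exactly half the maximum. -/

import Mathlib

/-- Lemma 3 minimization: F is minimized by γ = 0 and |α|² = |β|² = 1/2, with minimum
value (1-η)²/(2ηn̄_B(1+ηn̄_B)), exactly half the maximum. -/
theorem chi_sq_divergence_min (η nB : ℝ) (hη : η ∈ Set.Ioo (0:ℝ) 1) (hnB : 0 < nB)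
    (α β γ : ℂ) (hnorm : ‖α‖ ^ 2 + ‖β‖ ^ 2 = 1)
    (hγ : ‖γ‖ ≤ ‖α‖ * ‖β‖) :
    ((1 - η) ^ 2 / (2 * (η * nB) * (1 + η * nB))
      ≤ (((1 - η) ^ 2 + η * nB * (1 + η * nB)) * (‖α‖ ^ 4 + ‖β‖ ^ 4)
          + 2 * (‖α‖ ^ 2 * ‖β‖ ^ 2 * (η * nB) * (1 + η * nB)
              + (1 - η) ^ 2 * ‖γ‖ ^ 4)) / (η * nB * (1 + η * nB)) - 1)
    ∧ (γ = 0 → ‖α‖ ^ 2 = 1 / 2 → ‖β‖ ^ 2 = 1 / 2 →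
        (((1 - η) ^ 2 + η * nB * (1 + η * nB)) * (‖α‖ ^ 4 + ‖β‖ ^ 4)
          + 2 * (‖α‖ ^ 2 * ‖β‖ ^ 2 * (η * nB) * (1 + η * nB)
              + (1 - η) ^ 2 * ‖γ‖ ^ 4)) / (η * nB * (1 + η * nB)) - 1
        = (1 - η) ^ 2 / (2 * (η * nB) * (1 + η * nB))) := by
  obtain ⟨hη0, hη1⟩ := hη
  have hN : 0 < η * nB * (1 + η * nB) := by positivity
  set a := ‖α‖ with ha
  set b := ‖β‖ with hb
  set g := ‖γ‖ with hg
  have ha0 : 0 ≤ a := norm_nonneg α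
  have hb0 : 0 ≤ b := norm_nonneg β
  have hg0 : 0 ≤ g := norm_nonneg γ
  constructor
  · have h2N : (0:ℝ) < 2 * (η * nB) * (1 + η * nB) := by positivity
    rw [le_sub_iff_add_le, div_add' _ _ _ h2N.ne', div_le_div_iff₀ h2N hN]
    have h1 : (a ^ 2 + b ^ 2) ^ 2 = 1 := by rw [hnorm]; norm_num
    have h4 : a ^ 4 + b ^ 4 = 1 - 2 * (a ^ 2 * b ^ 2) := by linear_combination h1
    rw [h4]
    have hpos : 0 ≤ (η * nB * (1 + η * nB)) * ((1 - η) ^ 2 * ((a ^ 2 - b ^ 2) ^ 2 + 4 * g ^ 4)) := by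
      positivity
    have h6 : (((1 - η) ^ 2 + η * nB * (1 + η * nB)) * (1 - 2 * (a ^ 2 * b ^ 2))
          + 2 * (a ^ 2 * b ^ 2 * (η * nB) * (1 + η * nB) + (1 - η) ^ 2 * g ^ 4))
          * (2 * (η * nB) * (1 + η * nB))
        = ((1 - η) ^ 2 + 1 * (2 * (η * nB) * (1 + η * nB))) * (η * nB * (1 + η * nB))
          + (η * nB * (1 + η * nB)) * ((1 - η) ^ 2 * ((a ^ 2 - b ^ 2) ^ 2 + 4 * g ^ 4)) := by
      linear_combination (-((η * nB * (1 + η * nB)) * (1 - η) ^ 2)) * h1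
    linarith [hpos, h6]
  · intro h0 hA hB
    have : g = 0 := by rw [hg, h0, norm_zero]
    have hA4 : a ^ 4 = 1 / 4 := by nlinarith
    have hB4 : b ^ 4 = 1 / 4 := by nlinarith
    rw [this, hA4, hB4, hA, hB]
    field_simp
    ring
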